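/- arXiv:2009.06540 — 4 statements merged into one kernel-verified Lean document; each statement's English description precedes it below -/
import Mathlib

section
/- For every finite index set S and all families of nonnegative reals (a_i)_{i∈S}, (b_i)_{i∈S}: ∑_{i∈S} |a_i − b_i| ≤ ( ∑_{i∈S, a_i + b_i > 0} (a_i − b_i)² / √(a_i + b_i) )^{1/2} · ( ∑_{i∈S} (a_i + b_i) )^{1/4} · |S|^{1/4}. -/
open scoped BigOperators Classical

/-- Generalized Hölder bound used in Case 3 of the proof of Lemma 3.2 (ii):
`∑ᵢ |aᵢ − bᵢ| ≤ (∑_{i : aᵢ+bᵢ>0} (aᵢ−bᵢ)²/√(aᵢ+bᵢ))^{1/2} · (∑ᵢ (aᵢ+bᵢ))^{1/4} · |S|^{1/4}`. -/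
theorem holder_chi_square_bound {ι : Type*} (S : Finset ι) (a b : ι → ℝ)
    (ha : ∀ i ∈ S, 0 ≤ a i) (hb : ∀ i ∈ S, 0 ≤ b i) :
    ∑ i ∈ S, |a i - b i| ≤
      (∑ i ∈ S.filter (fun i => 0 < a i + b i), (a i - b i) ^ 2 / Real.sqrt (a i + b i))
          ^ ((1 : ℝ) / 2)
        * (∑ i ∈ S, (a i + b i)) ^ ((1 : ℝ) / 4)
        * (S.card : ℝ) ^ ((1 : ℝ) / 4) := by
  classical
  set T := S.filter (fun i => 0 < a i + b i) with hT
  -- reduce sum over S to sum over T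
  have hsum : ∑ i ∈ S, |a i - b i| = ∑ i ∈ T, |a i - b i| := by
    refine (Finset.sum_subset (Finset.filter_subset _ _) ?_).symm
    intro i hiS hiT
    have hab : ¬ (0 < a i + b i) := by
      intro h; exact hiT (Finset.mem_filter.mpr ⟨hiS, h⟩)
    have h0 : a i + b i = 0 := le_antisymm (not_lt.mp hab)
      (add_nonneg (ha i hiS) (hb i hiS))
    have ha0 : a i = 0 := le_antisymm (by linarith [hb i hiS]) (ha i hiS)
    have hb0 : b i = 0 := by linarith
    simp [ha0, hb0]
  set A := ∑ i ∈ T, (a i - b i) ^ 2 / Real.sqrt (a i + b i) with hA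
  set B := ∑ i ∈ S, (a i + b i) with hB
  have hApos : 0 ≤ A := by
    refine Finset.sum_nonneg fun i hi => ?_
    exact div_nonneg (sq_nonneg _) (Real.sqrt_nonneg _)
  have hBpos : 0 ≤ B := by
    refine Finset.sum_nonneg fun i hi => add_nonneg (ha i hi) (hb i hi)
  set C := ∑ i ∈ T, Real.sqrt (a i + b i) with hC
  have hCpos : 0 ≤ C := Finset.sum_nonneg fun i _ => Real.sqrt_nonneg _
  -- first Cauchy-Schwarz: (∑ |a-b|)² ≤ A * C
  have key1 : ∑ i ∈ T, |a i - b i| ≤ Real.sqrt A * Real.sqrt C := by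
    have cs := Finset.sum_mul_sq_le_sq_mul_sq T
      (fun i => |a i - b i| / Real.sqrt (Real.sqrt (a i + b i)))
      (fun i => Real.sqrt (Real.sqrt (a i + b i)))
    -- rewrite the LHS and RHS
    have hL : ∑ i ∈ T, (|a i - b i| / Real.sqrt (Real.sqrt (a i + b i))) *
        Real.sqrt (Real.sqrt (a i + b i)) = ∑ i ∈ T, |a i - b i| := by
      refine Finset.sum_congr rfl fun i hi => ?_
      have hpos : 0 < a i + b i := (Finset.mem_filter.mp hi).2
      have : Real.sqrt (Real.sqrt (a i + b i)) ≠ 0 := by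
        positivity
      field_simp
    have hf2 : ∑ i ∈ T, (|a i - b i| / Real.sqrt (Real.sqrt (a i + b i))) ^ 2 = A := by
      refine Finset.sum_congr rfl fun i hi => ?_
      have hpos : 0 < a i + b i := (Finset.mem_filter.mp hi).2
      rw [div_pow, sq_abs, Real.sq_sqrt (Real.sqrt_nonneg _)]
    have hg2 : ∑ i ∈ T, (Real.sqrt (Real.sqrt (a i + b i))) ^ 2 = C := by
      refine Finset.sum_congr rfl fun i hi => ?_
      exact Real.sq_sqrt (Real.sqrt_nonneg _)
    calc ∑ i ∈ T, |a i - b i|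
        = ∑ i ∈ T, (|a i - b i| / Real.sqrt (Real.sqrt (a i + b i))) *
            Real.sqrt (Real.sqrt (a i + b i)) := hL.symm
      _ ≤ Real.sqrt A * Real.sqrt C := by
          rw [hf2, hg2] at cs
          rw [← Real.sqrt_mul hApos]
          exact Real.le_sqrt_of_sq_le cs
  -- second Cauchy-Schwarz: C² ≤ B * card S
  have key2 : C ≤ Real.sqrt (B * S.card) := by
    have hcs := Finset.sum_mul_sq_le_sq_mul_sq T
      (fun i => Real.sqrt (a i + b i)) (fun _ => (1 : ℝ))
    simp only [mul_one, one_pow] at hcs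
    have h1 : ∑ i ∈ T, (Real.sqrt (a i + b i)) ^ 2 = ∑ i ∈ T, (a i + b i) := by
      refine Finset.sum_congr rfl fun i hi => ?_
      have hpos : 0 < a i + b i := (Finset.mem_filter.mp hi).2
      exact Real.sq_sqrt hpos.le
    have h2 : ∑ i ∈ T, (a i + b i) ≤ B := by
      refine Finset.sum_le_sum_of_subset_of_nonneg (Finset.filter_subset _ _) ?_
      intro i hi _; exact add_nonneg (ha i hi) (hb i hi)
    have h3 : (T.card : ℝ) ≤ (S.card : ℝ) := by
      exact_mod_cast Finset.card_le_card (Finset.filter_subset _ _)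
    have h4 : ∑ i ∈ T, (1 : ℝ) = (T.card : ℝ) := by simp
    rw [h1, h4] at hcs
    refine Real.le_sqrt_of_sq_le ?_
    calc C ^ 2 ≤ (∑ i ∈ T, (a i + b i)) * (T.card : ℝ) := hcs
      _ ≤ B * (S.card : ℝ) := by
          have := hCpos
          gcongr
  -- combine
  have hrpow2 : ∀ x : ℝ, 0 ≤ x → x ^ ((1:ℝ)/2) = Real.sqrt x := by
    intro x hx; rw [Real.sqrt_eq_rpow]
  have hrpow4 : ∀ x : ℝ, 0 ≤ x → x ^ ((1:ℝ)/4) = Real.sqrt (Real.sqrt x) := by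
    intro x hx
    rw [show (1:ℝ)/4 = (1/2)*(1/2) by norm_num, Real.rpow_mul hx,
      ← Real.sqrt_eq_rpow, ← Real.sqrt_eq_rpow]
  rw [hsum, hrpow2 A hApos, hrpow4 B hBpos, hrpow4 _ (Nat.cast_nonneg _)]
  calc ∑ i ∈ T, |a i - b i| ≤ Real.sqrt A * Real.sqrt C := key1
    _ ≤ Real.sqrt A * Real.sqrt (Real.sqrt (B * S.card)) := by
        gcongr
    _ = Real.sqrt A * (Real.sqrt (Real.sqrt B) * Real.sqrt (Real.sqrt (S.card : ℝ))) := by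
        rw [Real.sqrt_mul hBpos, Real.sqrt_mul (Real.sqrt_nonneg _)]
    _ = Real.sqrt A * Real.sqrt (Real.sqrt B) * Real.sqrt (Real.sqrt (S.card : ℝ)) := by
        ring
end

section
/- There exists a universal constant C > 0 such that the following holds. Let α be a finite set and let c : α → ℕ be a count function with total size T = ∑_u c(u). Color each of the T items (c(u) items of each value u) independently with a fair coin, placing it in S or in S'. Let M = ∑_u c(u)·1[c(u) ≥ 2], let s(u) be the number of items of value u placed in S, and let N = ∑_u s(u)·1[s(u) ≥ 2]. Then for every δ ∈ (0,1): Pr[ M > C·(N + log(1/δ)) ] ≤ δ. -/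
open scoped BigOperators Classical

/-- The number of non-singleton items of the multiset with count function `c`:
`M = ∑ u, c(u)·1[c(u) ≥ 2]`. -/
def Mcount {α : Type*} [Fintype α] (c : α → ℕ) : ℕ :=
  ∑ u, if 2 ≤ c u then c u else 0

/-- Given a coloring `ω` of the items (placing each item in `S` or `S'`, with `true`
meaning `S`), the number of items of value `u` placed in `S`. -/
noncomputable def sCount {α : Type*} [Fintype α] (c : α → ℕ)
    (ω : (Σ u : α, Fin (c u)) → Bool) (u : α) : ℕ :=
  (Finset.univ.filter (fun j : Fin (c u) => ω ⟨u, j⟩ = true)).card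

/-- The number of items placed in `S` whose value occurs at least twice among the items
placed in `S`: `N = ∑ u, s(u)·1[s(u) ≥ 2]`. -/
noncomputable def Ncount {α : Type*} [Fintype α] (c : α → ℕ)
    (ω : (Σ u : α, Fin (c u)) → Bool) : ℕ :=
  ∑ u, if 2 ≤ sCount c ω u then sCount c ω u else 0

set_option maxHeartbeats 1000000

noncomputable def kc {m : ℕ} (f : Fin m → Bool) : ℕ :=
  (Finset.univ.filter (fun j => f j = true)).card

lemma half_pow_eq_prod {m : ℕ} (f : Fin m → Bool) :
    ((1:ℝ)/2) ^ kc f = ∏ j, (if f j = true then ((1:ℝ)/2) else 1) := by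
  rw [Finset.prod_ite, Finset.prod_const, Finset.prod_const, one_pow, mul_one, kc]

lemma sum_half_pow (m : ℕ) :
    ∑ f : Fin m → Bool, ((1:ℝ)/2) ^ kc f = (3/2) ^ m := by
  calc ∑ f : Fin m → Bool, ((1:ℝ)/2) ^ kc f
      = ∑ f : Fin m → Bool, ∏ j, (if f j = true then ((1:ℝ)/2) else 1) := by
        exact Finset.sum_congr rfl (fun f _ => half_pow_eq_prod f)
    _ = ∏ j : Fin m, ∑ b : Bool, (if b = true then ((1:ℝ)/2) else 1) := by
        rw [Fintype.prod_sum]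
    _ = (3/2) ^ m := by simp [Fintype.sum_bool]; norm_num

lemma sum_kc_half_pow (m : ℕ) :
    ∑ f : Fin m → Bool, (kc f : ℝ) * ((1:ℝ)/2) ^ kc f
      = (m : ℝ) * ((1:ℝ)/2) * (3/2) ^ (m - 1) := by
  have hkc : ∀ f : Fin m → Bool, (kc f : ℝ) = ∑ j, (if f j = true then (1:ℝ) else 0) := by
    intro f
    rw [kc, Finset.card_filter]
    push_cast
    rfl
  calc ∑ f : Fin m → Bool, (kc f : ℝ) * ((1:ℝ)/2) ^ kc f
      = ∑ f : Fin m → Bool, ∑ j : Fin m,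
          (if f j = true then (1:ℝ) else 0) * ((1:ℝ)/2) ^ kc f := by
        refine Finset.sum_congr rfl (fun f _ => ?_)
        rw [hkc f, Finset.sum_mul]
    _ = ∑ j : Fin m, ∑ f : Fin m → Bool,
          (if f j = true then (1:ℝ) else 0) * ((1:ℝ)/2) ^ kc f := Finset.sum_comm
    _ = ∑ j : Fin m, ∑ f : Fin m → Bool, ∏ j' : Fin m,
          (if j' = j then (if f j' = true then ((1:ℝ)/2) else 0)
            else (if f j' = true then ((1:ℝ)/2) else 1)) := by
        refine Finset.sum_congr rfl (fun j _ => Finset.sum_congr rfl (fun f _ => ?_))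
        have hsplit : ∀ j' : Fin m,
            (if j' = j then (if f j' = true then ((1:ℝ)/2) else 0)
              else (if f j' = true then ((1:ℝ)/2) else 1))
            = (if f j' = true then ((1:ℝ)/2) else 1) *
              (if j' = j then (if f j' = true then (1:ℝ) else 0) else 1) := by
          intro j'
          by_cases h1 : j' = j
          · subst h1; by_cases h2 : f j' = true <;> simp [h2]
          · by_cases h2 : f j' = true <;> simp [h1, h2]
        rw [Finset.prod_congr rfl (fun j' _ => hsplit j'), Finset.prod_mul_distrib,
          ← half_pow_eq_prod f, Finset.prod_ite_eq' Finset.univ j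
            (fun j' => if f j' = true then (1:ℝ) else 0)]
        simp [mul_comm]
    _ = ∑ j : Fin m, ∏ j' : Fin m, ∑ b : Bool,
          (if j' = j then (if b = true then ((1:ℝ)/2) else 0)
            else (if b = true then ((1:ℝ)/2) else 1)) := by
        refine Finset.sum_congr rfl (fun j _ => ?_)
        rw [Fintype.prod_sum]
    _ = ∑ j : Fin m, ∏ j' : Fin m, (if j' = j then ((1:ℝ)/2) else (3/2)) := by
        refine Finset.sum_congr rfl (fun j _ => Finset.prod_congr rfl (fun j' _ => ?_))
        by_cases h : j' = j <;> simp [h] <;> norm_num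
    _ = (m : ℝ) * ((1:ℝ)/2) * (3/2) ^ (m - 1) := by
        have hj : ∀ j : Fin m, ∏ j' : Fin m, (if j' = j then ((1:ℝ)/2) else (3/2))
            = ((1:ℝ)/2) * (3/2) ^ (m - 1) := by
          intro j
          rw [← Finset.mul_prod_erase Finset.univ _ (Finset.mem_univ j)]
          simp only [if_pos rfl]
          congr 1
          rw [Finset.prod_congr rfl (fun j' hj' => if_neg (Finset.ne_of_mem_erase hj')),
            Finset.prod_const, Finset.card_erase_of_mem (Finset.mem_univ j),
            Finset.card_univ, Fintype.card_fin]
        rw [Finset.sum_congr rfl (fun j _ => hj j), Finset.sum_const, Finset.card_univ,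
          Fintype.card_fin, nsmul_eq_mul]
        ring

noncomputable def xc {m : ℕ} (f : Fin m → Bool) : ℕ :=
  if 2 ≤ kc f then kc f else 0

lemma arith (k : ℕ) :
    ((3:ℝ)/2) ^ (k+1) * ((k+5)/2) ≤ (99/50) ^ (k+2) := by
  induction k with
  | zero => norm_num
  | succ k ih =>
      have hP : (0:ℝ) ≤ (3/2) ^ (k+1) := by positivity
      have hR : (0:ℝ) ≤ (99/50) ^ (k+2) := by positivity
      have hk : (0:ℝ) ≤ (k:ℝ) := Nat.cast_nonneg k
      push_cast
      calc ((3:ℝ)/2) ^ (k+1+1) * (((k:ℝ)+1+5)/2)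
          = (3/2) * ((3/2) ^ (k+1) * (((k:ℝ)+6)/2)) := by ring
        _ ≤ (3/2) * ((6/5) * ((3/2) ^ (k+1) * (((k:ℝ)+5)/2))) := by
            nlinarith [mul_nonneg hP hk]
        _ ≤ (99/50) ^ (k+2) * (99/50) := by nlinarith
        _ = (99/50) ^ (k+2+1) := (pow_succ _ _).symm

lemma pointwise {m : ℕ} (f : Fin m → Bool) :
    ((1:ℝ)/2) ^ xc f ≤ (1 + (kc f : ℝ)) * ((1:ℝ)/2) ^ kc f := by
  rw [xc]
  by_cases h : 2 ≤ kc f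
  · rw [if_pos h]
    have : (0:ℝ) < ((1:ℝ)/2) ^ kc f := by positivity
    nlinarith [Nat.cast_nonneg (α := ℝ) (kc f)]
  · rw [if_neg h, pow_zero]
    interval_cases hk : kc f <;> norm_num


lemma sum_weight_le (m : ℕ) :
    ∑ f : Fin m → Bool, ((1:ℝ)/2) ^ xc f
      ≤ 2 ^ m * (if 2 ≤ m then ((99:ℝ)/100) ^ m else 1) := by
  by_cases hm : 2 ≤ m
  · rw [if_pos hm]
    obtain ⟨k, rfl⟩ : ∃ k, m = k + 2 := ⟨m - 2, by omega⟩
    have step1 : ∑ f : Fin (k+2) → Bool, ((1:ℝ)/2) ^ xc f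
        ≤ ∑ f : Fin (k+2) → Bool, (1 + (kc f : ℝ)) * ((1:ℝ)/2) ^ kc f :=
      Finset.sum_le_sum (fun f _ => pointwise f)
    have step2 : ∑ f : Fin (k+2) → Bool, (1 + (kc f : ℝ)) * ((1:ℝ)/2) ^ kc f
        = (3/2) ^ (k+2) + ((k+2 : ℕ) : ℝ) * ((1:ℝ)/2) * (3/2) ^ (k+2-1) := by
      rw [← sum_half_pow (k+2), ← sum_kc_half_pow (k+2), ← Finset.sum_add_distrib]
      refine Finset.sum_congr rfl (fun f _ => by ring)
    have step3 : ((3:ℝ)/2) ^ (k+2) + ((k+2 : ℕ) : ℝ) * ((1:ℝ)/2) * (3/2) ^ (k+2-1)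
        ≤ 2 ^ (k+2) * ((99:ℝ)/100) ^ (k+2) := by
      have h := arith k
      have he : ((2:ℝ)) ^ (k+2) * ((99:ℝ)/100) ^ (k+2) = (99/50) ^ (k+2) := by
        rw [← mul_pow]; norm_num
      have hs : (k+2) - 1 = k + 1 := by omega
      have hpow : ((3:ℝ)/2) ^ (k+2) = (3/2) ^ (k+1) * (3/2) := pow_succ _ _
      rw [hs, he]
      push_cast
      nlinarith [pow_nonneg (show (0:ℝ) ≤ 3/2 by norm_num) (k+1)]
    linarith
  · rw [if_neg hm, mul_one]
    calc ∑ f : Fin m → Bool, ((1:ℝ)/2) ^ xc f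
        ≤ ∑ _f : Fin m → Bool, (1:ℝ) := by
          refine Finset.sum_le_sum (fun f _ => ?_)
          exact pow_le_one₀ (by norm_num) (by norm_num)
      _ = 2 ^ m := by
          rw [Finset.sum_const, Finset.card_univ, Fintype.card_fun]
          simp

lemma key_bound (α : Type) [Fintype α] (c : α → ℕ) :
    ∑ ω : (Σ u : α, Fin (c u)) → Bool, ((1:ℝ)/2) ^ (Ncount c ω)
      ≤ 2 ^ (∑ u, c u) * ((99:ℝ)/100) ^ (Mcount c) := by
  have hN : ∀ ω : (Σ u : α, Fin (c u)) → Bool,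
      ((1:ℝ)/2) ^ (Ncount c ω) = ∏ u, ((1:ℝ)/2) ^ (xc (fun j => ω ⟨u, j⟩)) := by
    intro ω
    rw [Finset.prod_pow_eq_pow_sum]
    congr 1
  calc ∑ ω : (Σ u : α, Fin (c u)) → Bool, ((1:ℝ)/2) ^ (Ncount c ω)
      = ∑ ω : (Σ u : α, Fin (c u)) → Bool, ∏ u, ((1:ℝ)/2) ^ (xc (fun j => ω ⟨u, j⟩)) :=
        Finset.sum_congr rfl (fun ω _ => hN ω)
    _ = ∑ g : ∀ u : α, Fin (c u) → Bool, ∏ u, ((1:ℝ)/2) ^ (xc (g u)) :=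
        Equiv.sum_comp (Equiv.piCurry (fun _ _ => Bool))
          (fun g => ∏ u, ((1:ℝ)/2) ^ (xc (g u)))
    _ = ∏ u, ∑ f : Fin (c u) → Bool, ((1:ℝ)/2) ^ (xc f) := (Fintype.prod_sum (fun u (f : Fin (c u) → Bool) => ((1:ℝ)/2) ^ (xc f))).symm
    _ ≤ ∏ u, ((2:ℝ) ^ (c u) * (if 2 ≤ c u then ((99:ℝ)/100) ^ (c u) else 1)) := by
        refine Finset.prod_le_prod (fun u _ => ?_) (fun u _ => sum_weight_le (c u))
        exact Finset.sum_nonneg (fun f _ => by positivity)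
    _ = 2 ^ (∑ u, c u) * ((99:ℝ)/100) ^ (Mcount c) := by
        rw [Finset.prod_mul_distrib]
        congr 1
        · rw [← Finset.prod_pow_eq_pow_sum]
        · rw [Mcount, ← Finset.prod_pow_eq_pow_sum]
          refine Finset.prod_congr rfl (fun u _ => ?_)
          split <;> simp

/-- Lemma 4.4: under a uniformly random partition of the items into `S` and `S'`, the
number `M` of non-singletons of the whole multiset exceeds `C·(N + log(1/δ))` with
probability at most `δ`, where `N` is the number of non-singletons within `S`. -/
theorem nonsingletons_halve :
    ∃ C > (0 : ℝ), ∀ (α : Type) [Fintype α] (c : α → ℕ) (δ : ℝ), 0 < δ → δ < 1 →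
      (((Finset.univ : Finset ((Σ u : α, Fin (c u)) → Bool)).filter
          (fun ω => C * ((Ncount c ω : ℝ) + Real.log (1 / δ)) < (Mcount c : ℝ))).card : ℝ)
        / (Fintype.card ((Σ u : α, Fin (c u)) → Bool) : ℝ) ≤ δ := by
  refine ⟨1000, by norm_num, ?_⟩
  intro α _ c δ hδ0 hδ1
  set L := Real.log (1 / δ) with hLdef
  have hL0 : 0 < L := Real.log_pos (by rw [lt_div_iff₀ hδ0]; linarith)
  set E := (Finset.univ : Finset ((Σ u : α, Fin (c u)) → Bool)).filter
      (fun ω => 1000 * ((Ncount c ω : ℝ) + L) < (Mcount c : ℝ)) with hEdef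
  have hcard : (Fintype.card ((Σ u : α, Fin (c u)) → Bool) : ℝ) = 2 ^ (∑ u, c u) := by
    rw [Fintype.card_fun, Fintype.card_sigma]
    push_cast
    simp
  rcases E.eq_empty_or_nonempty with h | ⟨ω₀, hω₀⟩
  · rw [h]
    simpa using le_of_lt hδ0
  · have hω₀' := (Finset.mem_filter.mp hω₀).2
    have hM : 1000 * L < (Mcount c : ℝ) := by
      have hN0 : (0:ℝ) ≤ (Ncount c ω₀ : ℝ) := Nat.cast_nonneg _
      nlinarith
    set M := Mcount c with hMdef
    set T := ∑ u, c u with hTdef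
    set B := ((1:ℝ)/2) ^ (((M:ℕ):ℝ)/1000) with hBdef
    have hB : (0:ℝ) < B := Real.rpow_pos_of_pos (by norm_num) _
    have hmark : (E.card : ℝ) * B ≤ ∑ ω : (Σ u : α, Fin (c u)) → Bool, ((1:ℝ)/2) ^ (Ncount c ω) := by
      calc (E.card : ℝ) * B = ∑ _ω ∈ E, B := by rw [Finset.sum_const, nsmul_eq_mul]
        _ ≤ ∑ ω ∈ E, ((1:ℝ)/2) ^ (Ncount c ω) := by
            refine Finset.sum_le_sum (fun ω hω => ?_)
            have hmem := (Finset.mem_filter.mp hω).2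
            have hNle : ((Ncount c ω : ℕ) : ℝ) ≤ ((M:ℕ):ℝ)/1000 := by nlinarith
            calc B ≤ ((1:ℝ)/2) ^ (((Ncount c ω : ℕ)):ℝ) :=
                  Real.rpow_le_rpow_of_exponent_ge (by norm_num) (by norm_num) hNle
              _ = ((1:ℝ)/2) ^ (Ncount c ω) := Real.rpow_natCast _ _
        _ ≤ ∑ ω : (Σ u : α, Fin (c u)) → Bool, ((1:ℝ)/2) ^ (Ncount c ω) :=
            Finset.sum_le_sum_of_subset_of_nonneg (Finset.filter_subset _ _)
              (fun ω _ _ => by positivity)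
    have h1 : (E.card : ℝ) * B ≤ 2 ^ T * ((99:ℝ)/100) ^ M := le_trans hmark (key_bound α c)
    -- the exponential comparison
    have hlog99 : Real.log ((99:ℝ)/100) ≤ -(1/100) := by
      have := Real.log_le_sub_one_of_pos (show (0:ℝ) < 99/100 by norm_num)
      linarith
    have hlog2 : Real.log 2 ≤ 1 := by
      have := Real.log_le_sub_one_of_pos (show (0:ℝ) < 2 by norm_num)
      linarith
    have hlog2' : (0:ℝ) ≤ Real.log 2 := Real.log_nonneg one_le_two
    have hM0 : (0:ℝ) ≤ ((M:ℕ):ℝ) := Nat.cast_nonneg _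
    have h2 : ((99:ℝ)/100) ^ M ≤ δ * B := by
      have hBe : B = Real.exp (-(Real.log 2) * (((M:ℕ):ℝ)/1000)) := by
        rw [hBdef, Real.rpow_def_of_pos (by norm_num : (0:ℝ) < 1/2)]
        rw [show Real.log ((1:ℝ)/2) = -Real.log 2 by rw [one_div, Real.log_inv]]
      have h99 : ((99:ℝ)/100) ^ M = Real.exp (Real.log ((99:ℝ)/100) * ((M:ℕ):ℝ)) := by
        rw [← Real.rpow_natCast ((99:ℝ)/100) M, Real.rpow_def_of_pos (by norm_num)]
      have hδe : δ = Real.exp (Real.log δ) := (Real.exp_log hδ0).symm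
      have hLδ : L = -Real.log δ := by rw [hLdef, one_div, Real.log_inv]
      rw [h99, hBe]
      calc Real.exp (Real.log ((99:ℝ)/100) * ((M:ℕ):ℝ))
          ≤ Real.exp (Real.log δ + -(Real.log 2) * (((M:ℕ):ℝ)/1000)) := by
            rw [Real.exp_le_exp]
            have e1 : Real.log ((99:ℝ)/100) * ((M:ℕ):ℝ) ≤ -(1/100) * ((M:ℕ):ℝ) :=
              mul_le_mul_of_nonneg_right hlog99 hM0
            have e2 : Real.log 2 * (((M:ℕ):ℝ)/1000) ≤ 1 * (((M:ℕ):ℝ)/1000) :=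
              mul_le_mul_of_nonneg_right hlog2 (by positivity)
            have e3 : Real.log δ = -L := by rw [hLδ]; ring
            linarith
        _ = Real.exp (Real.log δ) * Real.exp (-(Real.log 2) * (((M:ℕ):ℝ)/1000)) :=
            Real.exp_add _ _
        _ = δ * Real.exp (-(Real.log 2) * (((M:ℕ):ℝ)/1000)) := by rw [← hδe]
    have h2T : (0:ℝ) < 2 ^ T := by positivity
    have h3 : (E.card : ℝ) ≤ 2 ^ T * δ := by
      have h4 : (E.card : ℝ) * B ≤ (2 ^ T * δ) * B := by
        calc (E.card : ℝ) * B ≤ 2 ^ T * ((99:ℝ)/100) ^ M := h1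
          _ ≤ 2 ^ T * (δ * B) := mul_le_mul_of_nonneg_left h2 (le_of_lt h2T)
          _ = (2 ^ T * δ) * B := by ring
      exact le_of_mul_le_mul_right h4 hB
    rw [hcard, div_le_iff₀ h2T]
    linarith
end

section
/- Let α be a finite set and let a, b : α → ℕ be count functions. For each u ∈ α independently, let X_u^{p0} ~ Binomial(a(u), 1/2) and set X_u^{p1} = a(u) − X_u^{p0}; likewise let X_u^{q0} ~ Binomial(b(u), 1/2) and X_u^{q1} = b(u) − X_u^{q0}, with all these random variables mutually independent across u and between the a- and b-splits. Define Z = ∑_u (|X_u^{p0} − X_u^{q0}| + |X_u^{p1} − X_u^{q1}| − |X_u^{p0} − X_u^{p1}| − |X_u^{q0} − X_u^{q1}|), N_p = ∑_u a(u)·1[a(u) ≥ 2], and N_q = ∑_u b(u)·1[a(u) + b(u) ≥ 2]. Then Pr[ Z < N_p/6 − 2·N_q − 100 ] < 1/2. -/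
open scoped BigOperators Classical

/-- `N_p = ∑ u, a(u)·1[a(u) ≥ 2]`. -/
def NpCount {α : Type*} [Fintype α] (a : α → ℕ) : ℕ :=
  ∑ u, if 2 ≤ a u then a u else 0

/-- `N_q = ∑ u, b(u)·1[a(u) + b(u) ≥ 2]`. -/
def NqCount {α : Type*} [Fintype α] (a b : α → ℕ) : ℕ :=
  ∑ u, if 2 ≤ a u + b u then b u else 0

section Factor
variable {I : Type} [DecidableEq I] [Fintype I]

lemma auxFactor (p : I → Prop) [DecidablePred p] (F G : (I → Bool) → ℝ)
    (hF : ∀ ω ω' : I → Bool, (∀ i, p i → ω i = ω' i) → F ω = F ω')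
    (hG : ∀ ω ω' : I → Bool, (∀ i, ¬ p i → ω i = ω' i) → G ω = G ω') :
    (∑ ω : I → Bool, F ω * G ω) * (Fintype.card (I → Bool) : ℝ)
      = (∑ ω : I → Bool, F ω) * (∑ ω : I → Bool, G ω) := by
  classical
  set e := Equiv.piEquivPiSubtypeProd p (fun _ : I => Bool) with he
  have hFx : ∀ (x : {i // p i} → Bool) (y : {i // ¬ p i} → Bool),
      F (e.symm (x, y)) = F (e.symm (x, fun _ => false)) := by
    intro x y
    apply hF
    intro i hi
    simp [he, Equiv.piEquivPiSubtypeProd, hi]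
  have hGy : ∀ (x : {i // p i} → Bool) (y : {i // ¬ p i} → Bool),
      G (e.symm (x, y)) = G (e.symm ((fun _ => false), y)) := by
    intro x y
    apply hG
    intro i hi
    simp [he, Equiv.piEquivPiSubtypeProd, hi]
  have hsum : ∀ f : (I → Bool) → ℝ, ∑ ω : I → Bool, f ω
      = ∑ z : ({i // p i} → Bool) × ({i // ¬ p i} → Bool), f (e.symm z) :=
    fun f => (Equiv.sum_comp e.symm f).symm
  have hcard : (Fintype.card (I → Bool) : ℝ)
      = (Fintype.card ({i // p i} → Bool) : ℝ) * (Fintype.card ({i // ¬ p i} → Bool) : ℝ) := by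
    rw [← Nat.cast_mul, ← Fintype.card_prod]
    exact_mod_cast Fintype.card_congr e
  rw [hsum (fun ω => F ω * G ω), hsum F, hsum G, hcard]
  rw [Fintype.sum_prod_type, Fintype.sum_prod_type, Fintype.sum_prod_type]
  have h1 : ∀ x, ∑ y, F (e.symm (x, y)) * G (e.symm (x, y))
      = F (e.symm (x, fun _ => false)) * ∑ y, G (e.symm ((fun _ => false), y)) := by
    intro x
    rw [Finset.mul_sum]
    refine Finset.sum_congr rfl fun y _ => ?_
    rw [hFx x y, hGy x y]
  have h2 : ∀ x, ∑ y, F (e.symm (x, y))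
      = (Fintype.card ({i // ¬ p i} → Bool) : ℝ) * F (e.symm (x, fun _ => false)) := by
    intro x
    rw [Finset.sum_congr rfl fun y _ => hFx x y, Finset.sum_const, Finset.card_univ,
      nsmul_eq_mul]
  have h3 : ∀ x, ∑ y, G (e.symm (x, y)) = ∑ y, G (e.symm ((fun _ => false), y)) :=
    fun x => Finset.sum_congr rfl fun y _ => hGy x y
  rw [Finset.sum_congr rfl fun x _ => h1 x, Finset.sum_congr rfl fun x _ => h2 x,
    Finset.sum_congr rfl fun x _ => h3 x, Finset.sum_const, Finset.card_univ, nsmul_eq_mul,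
    ← Finset.sum_mul, ← Finset.mul_sum]
  ring

lemma auxSumInd (i₀ : I) :
    ∑ ω : I → Bool, (if ω i₀ then (1:ℝ) else -1) = 0 := by
  classical
  set e := Equiv.funSplitAt i₀ Bool with he
  rw [(Equiv.sum_comp e.symm (fun ω => if ω i₀ then (1:ℝ) else -1)).symm]
  have : ∀ z : Bool × ({j // j ≠ i₀} → Bool), (e.symm z) i₀ = z.1 := by
    intro z
    simp [he, Equiv.funSplitAt, Equiv.piSplitAt]
  rw [Fintype.sum_prod_type]
  simp [this]

lemma auxPair {i j : I} (hij : i ≠ j) :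
    ∑ ω : I → Bool, ((if ω i then (1:ℝ) else -1) * (if ω j then (1:ℝ) else -1)) = 0 := by
  classical
  have h := auxFactor (fun k => k = i) (fun ω => if ω i then (1:ℝ) else -1)
    (fun ω => if ω j then (1:ℝ) else -1)
    (fun ω ω' h => by rw [h i rfl])
    (fun ω ω' h => by rw [h j (Ne.symm hij)])
  rw [auxSumInd i, auxSumInd j] at h
  have hN : (0:ℝ) < (Fintype.card (I → Bool) : ℝ) := by
    exact_mod_cast Fintype.card_pos
  nlinarith [h]

end Factor

set_option maxHeartbeats 1000000
section Main
variable {α : Type} [Fintype α]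

noncomputable def gFun (a : α → ℕ) (u : α) (x : (Σ u : α, Fin (a u)) → Bool) : ℝ :=
  if 2 ≤ a u then |2 * (sCount a x u : ℝ) - (a u : ℝ)| else 0

noncomputable def WFun (a : α → ℕ) (x : (Σ u : α, Fin (a u)) → Bool) : ℝ :=
  ∑ u, gFun a u x

lemma gFun_nonneg (a : α → ℕ) (u : α) (x : (Σ u : α, Fin (a u)) → Bool) :
    0 ≤ gFun a u x := by
  unfold gFun; split
  · exact abs_nonneg _
  · exact le_refl 0

lemma sCount_le (a : α → ℕ) (x : (Σ u : α, Fin (a u)) → Bool) (u : α) :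
    sCount a x u ≤ a u :=
  le_trans (Finset.card_filter_le _ _) (by simp)

lemma sCount_congr (a : α → ℕ) (u : α) (x x' : (Σ u : α, Fin (a u)) → Bool)
    (h : ∀ j : Fin (a u), x ⟨u, j⟩ = x' ⟨u, j⟩) : sCount a x u = sCount a x' u := by
  unfold sCount
  congr 1
  apply Finset.filter_congr
  intro j _
  rw [h j]

lemma eps_sum (a : α → ℕ) (u : α) (x : (Σ u : α, Fin (a u)) → Bool) :
    ∑ j : Fin (a u), (if x ⟨u, j⟩ then (1:ℝ) else -1)
      = 2 * (sCount a x u : ℝ) - (a u : ℝ) := by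
  have h : ∀ j : Fin (a u), (if x ⟨u, j⟩ then (1:ℝ) else -1)
      = 2 * (if x ⟨u, j⟩ = true then (1:ℝ) else 0) - 1 := by
    intro j; by_cases h : x ⟨u, j⟩ <;> norm_num [h]
  rw [Finset.sum_congr rfl fun j _ => h j, Finset.sum_sub_distrib, ← Finset.mul_sum,
    Finset.sum_boole, Finset.sum_const, Finset.card_univ]
  simp [sCount]

lemma gFun_congr (a : α → ℕ) (u : α) (x x' : (Σ u : α, Fin (a u)) → Bool)
    (h : ∀ i : Σ v : α, Fin (a v), i.1 = u → x i = x' i) : gFun a u x = gFun a u x' := by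
  unfold gFun
  rw [sCount_congr a u x x' (fun j => h ⟨u, j⟩ rfl)]

lemma g_sq_sum (a : α → ℕ) (u : α) :
    ∑ x : (Σ u : α, Fin (a u)) → Bool, (gFun a u x) ^ 2
      = (if 2 ≤ a u then (a u : ℝ) else 0)
        * (Fintype.card ((Σ u : α, Fin (a u)) → Bool) : ℝ) := by
  by_cases h2 : 2 ≤ a u
  · simp only [gFun, if_pos h2, sq_abs]
    have hx : ∀ x : (Σ u : α, Fin (a u)) → Bool,
        (2 * (sCount a x u : ℝ) - (a u : ℝ)) ^ 2
          = ∑ j : Fin (a u), ∑ k : Fin (a u),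
              (if x ⟨u, j⟩ then (1:ℝ) else -1) * (if x ⟨u, k⟩ then (1:ℝ) else -1) := by
      intro x
      rw [← Finset.sum_mul_sum, eps_sum]
      ring
    have hin : ∀ j : Fin (a u),
        ∑ k : Fin (a u), ∑ x : (Σ u : α, Fin (a u)) → Bool,
            (if x ⟨u, j⟩ then (1:ℝ) else -1) * (if x ⟨u, k⟩ then (1:ℝ) else -1)
          = (Fintype.card ((Σ u : α, Fin (a u)) → Bool) : ℝ) := by
      intro j
      rw [Finset.sum_eq_single_of_mem j (Finset.mem_univ j) (fun k _ hk => by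
        refine auxPair (fun hh => hk ?_)
        exact (eq_of_heq (Sigma.mk.inj_iff.mp hh).2).symm)]
      have h1 : ∀ x : (Σ u : α, Fin (a u)) → Bool,
          (if x ⟨u, j⟩ then (1:ℝ) else -1) * (if x ⟨u, j⟩ then (1:ℝ) else -1) = 1 := by
        intro x; by_cases h : x ⟨u, j⟩ <;> norm_num [h]
      rw [Finset.sum_congr rfl fun x _ => h1 x, Finset.sum_const, Finset.card_univ,
        nsmul_eq_mul, mul_one]
    calc ∑ x : (Σ u : α, Fin (a u)) → Bool, (2 * (sCount a x u : ℝ) - (a u : ℝ)) ^ 2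
        = ∑ x : (Σ u : α, Fin (a u)) → Bool, ∑ j : Fin (a u), ∑ k : Fin (a u),
            (if x ⟨u, j⟩ then (1:ℝ) else -1) * (if x ⟨u, k⟩ then (1:ℝ) else -1) :=
          Finset.sum_congr rfl fun x _ => hx x
      _ = ∑ j : Fin (a u), ∑ x : (Σ u : α, Fin (a u)) → Bool, ∑ k : Fin (a u),
            (if x ⟨u, j⟩ then (1:ℝ) else -1) * (if x ⟨u, k⟩ then (1:ℝ) else -1) :=
          Finset.sum_comm
      _ = ∑ j : Fin (a u), ∑ k : Fin (a u), ∑ x : (Σ u : α, Fin (a u)) → Bool,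
            (if x ⟨u, j⟩ then (1:ℝ) else -1) * (if x ⟨u, k⟩ then (1:ℝ) else -1) :=
          Finset.sum_congr rfl fun j _ => Finset.sum_comm
      _ = ∑ j : Fin (a u), (Fintype.card ((Σ u : α, Fin (a u)) → Bool) : ℝ) :=
          Finset.sum_congr rfl fun j _ => hin j
      _ = (a u : ℝ) * (Fintype.card ((Σ u : α, Fin (a u)) → Bool) : ℝ) := by
          rw [Finset.sum_const, Finset.card_univ, nsmul_eq_mul]
          simp
  · simp [gFun, h2]

lemma g_indep (a : α → ℕ) {u v : α} (huv : u ≠ v) :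
    (∑ x : (Σ u : α, Fin (a u)) → Bool, gFun a u x * gFun a v x)
        * (Fintype.card ((Σ u : α, Fin (a u)) → Bool) : ℝ)
      = (∑ x : (Σ u : α, Fin (a u)) → Bool, gFun a u x)
        * (∑ x : (Σ u : α, Fin (a u)) → Bool, gFun a v x) :=
  auxFactor (fun i : Σ v : α, Fin (a v) => i.1 = u) (gFun a u) (gFun a v)
    (fun ω ω' h => gFun_congr a u ω ω' h)
    (fun ω ω' h => gFun_congr a v ω ω' (fun i hi => h i fun hh => huv ((hi.symm.trans hh).symm)))


lemma NpCast (a : α → ℕ) :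
    (NpCount a : ℝ) = ∑ u, if 2 ≤ a u then (a u : ℝ) else 0 := by
  unfold NpCount
  push_cast [apply_ite (fun n : ℕ => (n : ℝ))]
  rfl

lemma NpCast_nonneg (a : α → ℕ) : (0:ℝ) ≤ (NpCount a : ℝ) := Nat.cast_nonneg _

lemma var_le (a : α → ℕ) :
    (∑ x : (Σ u : α, Fin (a u)) → Bool, (WFun a x) ^ 2)
        * (Fintype.card ((Σ u : α, Fin (a u)) → Bool) : ℝ)
      - (∑ x : (Σ u : α, Fin (a u)) → Bool, WFun a x) ^ 2
      ≤ (NpCount a : ℝ) * (Fintype.card ((Σ u : α, Fin (a u)) → Bool) : ℝ) ^ 2 := by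
  set N : ℝ := (Fintype.card ((Σ u : α, Fin (a u)) → Bool) : ℝ) with hN
  set S : α → ℝ := fun u => ∑ x : (Σ u : α, Fin (a u)) → Bool, gFun a u x with hS
  have key : ∀ u v : α,
      (∑ x : (Σ u : α, Fin (a u)) → Bool, gFun a u x * gFun a v x) * N
        = S u * S v
          + (if u = v then (if 2 ≤ a u then (a u : ℝ) else 0) * N ^ 2 - (S u) ^ 2 else 0) := by
    intro u v
    by_cases huv : u = v
    · subst huv
      rw [if_pos rfl]
      have h1 : ∑ x : (Σ u : α, Fin (a u)) → Bool, gFun a u x * gFun a u x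
          = ∑ x : (Σ u : α, Fin (a u)) → Bool, (gFun a u x) ^ 2 :=
        Finset.sum_congr rfl fun x _ => (sq (gFun a u x)).symm
      rw [h1, g_sq_sum]
      ring
    · rw [g_indep a huv, if_neg huv, add_zero]
  have expand : ∀ x : (Σ u : α, Fin (a u)) → Bool,
      (WFun a x) ^ 2 = ∑ u, ∑ v, gFun a u x * gFun a v x := by
    intro x
    rw [WFun, ← Finset.sum_mul_sum, sq]
  have hW : (∑ x : (Σ u : α, Fin (a u)) → Bool, WFun a x) = ∑ u, S u := by
    unfold WFun
    exact Finset.sum_comm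
  calc (∑ x : (Σ u : α, Fin (a u)) → Bool, (WFun a x) ^ 2) * N
        - (∑ x : (Σ u : α, Fin (a u)) → Bool, WFun a x) ^ 2
      = (∑ x : (Σ u : α, Fin (a u)) → Bool, ∑ u, ∑ v, gFun a u x * gFun a v x) * N
          - (∑ u, S u) ^ 2 := by
        rw [Finset.sum_congr rfl fun x _ => expand x, hW]
    _ = (∑ u, ∑ v, (∑ x : (Σ u : α, Fin (a u)) → Bool, gFun a u x * gFun a v x) * N)
          - (∑ u, S u) ^ 2 := by
        have hswap : (∑ x : (Σ u : α, Fin (a u)) → Bool, ∑ u, ∑ v, gFun a u x * gFun a v x)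
            = ∑ u, ∑ v, ∑ x : (Σ u : α, Fin (a u)) → Bool, gFun a u x * gFun a v x := by
          rw [Finset.sum_comm]
          exact Finset.sum_congr rfl fun u _ => Finset.sum_comm
        rw [hswap, Finset.sum_mul]
        congr 1
        exact Finset.sum_congr rfl fun u _ => (Finset.sum_mul _ _ _)
    _ = (∑ u, ∑ v, (S u * S v
          + (if u = v then (if 2 ≤ a u then (a u : ℝ) else 0) * N ^ 2 - (S u) ^ 2 else 0)))
          - (∑ u, S u) ^ 2 := by
        rw [Finset.sum_congr rfl fun u _ => Finset.sum_congr rfl fun v _ => key u v]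
    _ = ∑ u, ((if 2 ≤ a u then (a u : ℝ) else 0) * N ^ 2 - (S u) ^ 2) := by
        rw [Finset.sum_congr rfl fun u _ => Finset.sum_add_distrib]
        rw [Finset.sum_add_distrib]
        have h1 : ∑ u, ∑ v, S u * S v = (∑ u, S u) ^ 2 := by
          rw [sq, Finset.sum_mul_sum]
        have h2 : ∀ u : α, (∑ v, if u = v then (if 2 ≤ a u then (a u : ℝ) else 0) * N ^ 2
            - (S u) ^ 2 else 0) = (if 2 ≤ a u then (a u : ℝ) else 0) * N ^ 2 - (S u) ^ 2 := by
          intro u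
          rw [Finset.sum_ite_eq, if_pos (Finset.mem_univ u)]
        rw [h1, Finset.sum_congr rfl fun u _ => h2 u]
        ring
    _ ≤ ∑ u, (if 2 ≤ a u then (a u : ℝ) else 0) * N ^ 2 := by
        refine Finset.sum_le_sum fun u _ => ?_
        nlinarith [sq_nonneg (S u)]
    _ = (NpCount a : ℝ) * N ^ 2 := by
        rw [← Finset.sum_mul, ← NpCast]

lemma mean_le (a : α → ℕ) :
    ∑ x : (Σ u : α, Fin (a u)) → Bool, WFun a x
      ≤ (17/24) * (NpCount a : ℝ) * (Fintype.card ((Σ u : α, Fin (a u)) → Bool) : ℝ) := by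
  set N : ℝ := (Fintype.card ((Σ u : α, Fin (a u)) → Bool) : ℝ) with hN
  have hN1 : (1:ℝ) ≤ N := by
    rw [hN]
    exact_mod_cast Fintype.card_pos
  have hW : (∑ x : (Σ u : α, Fin (a u)) → Bool, WFun a x)
      = ∑ u, ∑ x : (Σ u : α, Fin (a u)) → Bool, gFun a u x := by
    unfold WFun
    exact Finset.sum_comm
  rw [hW, NpCast, Finset.mul_sum, Finset.sum_mul]
  refine Finset.sum_le_sum fun u _ => ?_
  set S : ℝ := ∑ x : (Σ u : α, Fin (a u)) → Bool, gFun a u x with hSdef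
  have hSnn : 0 ≤ S :=
    Finset.sum_nonneg fun x _ => gFun_nonneg a u x
  have hCS : S ^ 2 ≤ N * ∑ x : (Σ u : α, Fin (a u)) → Bool, (gFun a u x) ^ 2 := by
    have := sq_sum_le_card_mul_sum_sq
      (s := (Finset.univ : Finset ((Σ u : α, Fin (a u)) → Bool))) (f := gFun a u)
    simpa [Finset.card_univ, hN] using this
  rw [g_sq_sum] at hCS
  by_cases h2 : 2 ≤ a u
  · rw [if_pos h2] at hCS ⊢
    have ha2 : (2:ℝ) ≤ (a u : ℝ) := by exact_mod_cast h2
    nlinarith [hCS, hSnn, hN1, ha2, sq_nonneg (S - 17/24 * (a u : ℝ) * N),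
      mul_nonneg (mul_nonneg (by norm_num : (0:ℝ) ≤ 17/24) (by linarith : (0:ℝ) ≤ (a u : ℝ))) (by linarith : (0:ℝ) ≤ N)]
  · rw [if_neg h2]
    have : S = 0 := by
      rw [hSdef]
      refine Finset.sum_eq_zero fun x _ => ?_
      simp [gFun, h2]
    rw [this]
    norm_num

lemma count_lt (a : α → ℕ) :
    2 * (((Finset.univ : Finset ((Σ u : α, Fin (a u)) → Bool)).filter
        (fun x => 5/6 * (NpCount a : ℝ) + 100 < WFun a x)).card : ℝ)
      < (Fintype.card ((Σ u : α, Fin (a u)) → Bool) : ℝ) := by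
  set N : ℝ := (Fintype.card ((Σ u : α, Fin (a u)) → Bool) : ℝ) with hN
  set Np : ℝ := (NpCount a : ℝ) with hNp
  have hN1 : (1:ℝ) ≤ N := by
    rw [hN]
    exact_mod_cast Fintype.card_pos
  have hNpos : (0:ℝ) < N := lt_of_lt_of_le one_pos hN1
  have hNpnn : (0:ℝ) ≤ Np := Nat.cast_nonneg _
  set T : ℝ := ∑ x : (Σ u : α, Fin (a u)) → Bool, WFun a x with hT
  set μ : ℝ := T / N with hμ
  have hvar0 := var_le a
  have hmean := mean_le a
  -- ∑ (W - μ)^2 ≤ Np * N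
  have hvar : ∑ x : (Σ u : α, Fin (a u)) → Bool, (WFun a x - μ) ^ 2 ≤ Np * N := by
    have hexp : ∑ x : (Σ u : α, Fin (a u)) → Bool, (WFun a x - μ) ^ 2
        = (∑ x : (Σ u : α, Fin (a u)) → Bool, (WFun a x) ^ 2) - 2 * μ * T + N * μ ^ 2 := by
      have : ∀ x : (Σ u : α, Fin (a u)) → Bool,
          (WFun a x - μ) ^ 2 = (WFun a x) ^ 2 - 2 * μ * WFun a x + μ ^ 2 := by
        intro x; ring
      rw [Finset.sum_congr rfl fun x _ => this x, Finset.sum_add_distrib,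
        Finset.sum_sub_distrib, ← Finset.mul_sum, Finset.sum_const, Finset.card_univ,
        nsmul_eq_mul]
      try rw [← hT]
      try rw [← hN]
      try ring
    rw [hexp]
    have hq : (∑ x : (Σ u : α, Fin (a u)) → Bool, (WFun a x) ^ 2) * N - T ^ 2 ≤ Np * N ^ 2 :=
      hvar0
    have hNe : N ≠ 0 := ne_of_gt hNpos
    have hμ2 : μ * N = T := by rw [hμ]; field_simp
    have hq2 : (∑ x : (Σ u : α, Fin (a u)) → Bool, (WFun a x) ^ 2) * N - (μ * N) ^ 2
        ≤ Np * N ^ 2 := by rw [hμ2]; exact hq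
    nlinarith [hq2, hNpos, hμ2]
  have hμle : μ ≤ 17/24 * Np := by
    rw [hμ, div_le_iff₀ hNpos]
    nlinarith [hmean]
  set F : Finset ((Σ u : α, Fin (a u)) → Bool) :=
    (Finset.univ : Finset ((Σ u : α, Fin (a u)) → Bool)).filter
      (fun x => 5/6 * Np + 100 < WFun a x) with hF
  have hcard : (F.card : ℝ) * (Np/8 + 100) ^ 2 ≤ Np * N := by
    have hbound : ∀ x ∈ F, (Np/8 + 100) ^ 2 ≤ (WFun a x - μ) ^ 2 := by
      intro x hx
      rw [hF, Finset.mem_filter] at hx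
      have h1 : Np/8 + 100 ≤ WFun a x - μ := by linarith [hx.2, hμle]
      have h2 : (0:ℝ) ≤ Np/8 + 100 := by linarith
      nlinarith
    calc (F.card : ℝ) * (Np/8 + 100) ^ 2
        = F.card • ((Np/8 + 100) ^ 2) := by rw [nsmul_eq_mul]
      _ ≤ ∑ x ∈ F, (WFun a x - μ) ^ 2 := Finset.card_nsmul_le_sum F _ _ hbound
      _ ≤ ∑ x : (Σ u : α, Fin (a u)) → Bool, (WFun a x - μ) ^ 2 :=
          Finset.sum_le_sum_of_subset_of_nonneg (Finset.subset_univ F)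
            (fun x _ _ => sq_nonneg _)
      _ ≤ Np * N := hvar
  have hkey : 2 * Np < (Np/8 + 100) ^ 2 := by nlinarith [sq_nonneg Np]
  have hc2 : (0:ℝ) < (Np/8 + 100) ^ 2 := by positivity
  have hFnn : (0:ℝ) ≤ (F.card : ℝ) := Nat.cast_nonneg _
  nlinarith [mul_lt_mul_of_pos_right hkey hNpos, hcard]

lemma sCount_le' (a : α → ℕ) (x : (Σ u : α, Fin (a u)) → Bool) (u : α) :
    sCount a x u ≤ a u :=
  le_trans (Finset.card_filter_le _ _) (by simp)

lemma NqCast (a b : α → ℕ) :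
    (NqCount a b : ℝ) = ∑ u, if 2 ≤ a u + b u then (b u : ℝ) else 0 := by
  unfold NqCount
  push_cast [apply_ite (fun n : ℕ => (n : ℝ))]
  rfl

lemma Z_lower (a b : α → ℕ) (x : (Σ u : α, Fin (a u)) → Bool)
    (y : (Σ u : α, Fin (b u)) → Bool) :
    (NpCount a : ℝ) - WFun a x - 2 * (NqCount a b : ℝ)
      ≤ ∑ u : α,
          (|(sCount a x u : ℝ) - (sCount b y u : ℝ)|
            + |((a u : ℝ) - (sCount a x u : ℝ)) - ((b u : ℝ) - (sCount b y u : ℝ))|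
            - |(sCount a x u : ℝ) - ((a u : ℝ) - (sCount a x u : ℝ))|
            - |(sCount b y u : ℝ) - ((b u : ℝ) - (sCount b y u : ℝ))|) := by
  rw [NpCast, NqCast, WFun, ← Finset.sum_sub_distrib, Finset.mul_sum, ← Finset.sum_sub_distrib]
  refine Finset.sum_le_sum fun u _ => ?_
  set p0 : ℝ := (sCount a x u : ℝ) with hp0
  set q0 : ℝ := (sCount b y u : ℝ) with hq0
  set A : ℝ := (a u : ℝ) with hA
  set B : ℝ := (b u : ℝ) with hB
  have hp0n : 0 ≤ p0 := Nat.cast_nonneg _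
  have hq0n : 0 ≤ q0 := Nat.cast_nonneg _
  have hpA : p0 ≤ A := by rw [hp0, hA]; exact_mod_cast sCount_le' a x u
  have hqB : q0 ≤ B := by rw [hq0, hB]; exact_mod_cast sCount_le' b y u
  have e1 : p0 - (A - p0) = 2 * p0 - A := by ring
  have h3 : |q0 - (B - q0)| ≤ B := abs_le.mpr ⟨by linarith, by linarith⟩
  have h6 : p0 - q0 ≤ |p0 - q0| := le_abs_self _
  have h7 : (A - p0) - (B - q0) ≤ |(A - p0) - (B - q0)| := le_abs_self _
  have h4 : |p0 - (A - p0)| ≤ |p0 - q0| + |q0 - (B - q0)| + |(A - p0) - (B - q0)| := by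
    calc |p0 - (A - p0)| ≤ |p0 - q0| + |q0 - (A - p0)| := abs_sub_le p0 q0 (A - p0)
      _ ≤ |p0 - q0| + (|q0 - (B - q0)| + |(B - q0) - (A - p0)|) := by
          linarith [abs_sub_le q0 (B - q0) (A - p0)]
      _ = |p0 - q0| + |q0 - (B - q0)| + |(A - p0) - (B - q0)| := by
          rw [abs_sub_comm (B - q0) (A - p0)]; ring
  unfold gFun
  rw [← hp0, ← hA]
  by_cases h2a : 2 ≤ a u
  · have h2b : 2 ≤ a u + b u := le_trans h2a (Nat.le_add_right _ _)
    rw [if_pos h2a, if_pos h2a, if_pos h2b, ← e1]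
    linarith
  · rw [if_neg h2a, if_neg h2a]
    by_cases h2b : 2 ≤ a u + b u
    · rw [if_pos h2b]
      linarith [abs_nonneg (p0 - q0), abs_nonneg ((A - p0) - (B - q0))]
    · rw [if_neg h2b]
      have hab : b u = 0 ∨ (b u = 1 ∧ a u = 0) := by omega
      rcases hab with hb0 | ⟨hb1, ha0⟩
      · have hB0 : B = 0 := by rw [hB, hb0]; norm_num
        have hq00 : q0 = 0 := le_antisymm (hB0 ▸ hqB) hq0n
        rw [hq00, hB0]
        simp only [sub_zero, sub_self, abs_zero, mul_zero, zero_sub, abs_neg]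
        have habs := abs_sub p0 (A - p0)
        linarith [abs_nonneg p0, abs_nonneg (A - p0)]
      · have hA0 : A = 0 := by rw [hA, ha0]; norm_num
        have hp00 : p0 = 0 := le_antisymm (hA0 ▸ hpA) hp0n
        rw [hp00, hA0]
        simp only [sub_zero, sub_self, abs_zero, mul_zero, zero_sub, abs_neg]
        have habs := abs_sub q0 (B - q0)
        linarith [abs_nonneg q0, abs_nonneg (B - q0)]
end Main

/-- Lemma 4.7: splitting each count `a(u)` as `X_u^{p0} ~ Binomial(a(u), 1/2)`,
`X_u^{p1} = a(u) − X_u^{p0}` (and similarly for `b`), all independent — realized here by a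
uniformly random flagging of the items — the statistic `Z` satisfies
`Pr[Z < N_p/6 − 2·N_q − 100] < 1/2`. -/
theorem Z_at_least_Np_whp (α : Type) [Fintype α] (a b : α → ℕ) :
    (((Finset.univ :
        Finset (((Σ u : α, Fin (a u)) → Bool) × ((Σ u : α, Fin (b u)) → Bool))).filter
        (fun ω =>
          (∑ u : α,
            (|(sCount a ω.1 u : ℝ) - (sCount b ω.2 u : ℝ)|
              + |((a u : ℝ) - (sCount a ω.1 u : ℝ)) - ((b u : ℝ) - (sCount b ω.2 u : ℝ))|
              - |(sCount a ω.1 u : ℝ) - ((a u : ℝ) - (sCount a ω.1 u : ℝ))|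
              - |(sCount b ω.2 u : ℝ) - ((b u : ℝ) - (sCount b ω.2 u : ℝ))|))
            < (NpCount a : ℝ) / 6 - 2 * (NqCount a b : ℝ) - 100)).card : ℝ)
      / (Fintype.card (((Σ u : α, Fin (a u)) → Bool) × ((Σ u : α, Fin (b u)) → Bool)) : ℝ)
      < 1 / 2 := by
  classical
  set E := ((Finset.univ :
      Finset (((Σ u : α, Fin (a u)) → Bool) × ((Σ u : α, Fin (b u)) → Bool))).filter
      (fun ω =>
        (∑ u : α,
          (|(sCount a ω.1 u : ℝ) - (sCount b ω.2 u : ℝ)|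
            + |((a u : ℝ) - (sCount a ω.1 u : ℝ)) - ((b u : ℝ) - (sCount b ω.2 u : ℝ))|
            - |(sCount a ω.1 u : ℝ) - ((a u : ℝ) - (sCount a ω.1 u : ℝ))|
            - |(sCount b ω.2 u : ℝ) - ((b u : ℝ) - (sCount b ω.2 u : ℝ))|))
          < (NpCount a : ℝ) / 6 - 2 * (NqCount a b : ℝ) - 100)) with hE
  set F := ((Finset.univ : Finset ((Σ u : α, Fin (a u)) → Bool)).filter
      (fun x => 5/6 * (NpCount a : ℝ) + 100 < WFun a x)) with hFdef
  have hsub : E ⊆ F ×ˢ (Finset.univ : Finset ((Σ u : α, Fin (b u)) → Bool)) := by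
    intro ω hω
    rw [hE, Finset.mem_filter] at hω
    rw [Finset.mem_product, hFdef, Finset.mem_filter]
    refine ⟨⟨Finset.mem_univ _, ?_⟩, Finset.mem_univ _⟩
    have hZ := Z_lower a b ω.1 ω.2
    have h2 := hω.2
    linarith
  have hEcard : (E.card : ℝ)
      ≤ (F.card : ℝ) * (Fintype.card ((Σ u : α, Fin (b u)) → Bool) : ℝ) := by
    have h := Finset.card_le_card hsub
    rw [Finset.card_product, Finset.card_univ] at h
    exact_mod_cast h
  have hFcard := count_lt a
  have hNb : (1:ℝ) ≤ (Fintype.card ((Σ u : α, Fin (b u)) → Bool) : ℝ) := by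
    exact_mod_cast Fintype.card_pos
  have hNa : (1:ℝ) ≤ (Fintype.card ((Σ u : α, Fin (a u)) → Bool) : ℝ) := by
    exact_mod_cast Fintype.card_pos
  have hprod : (Fintype.card (((Σ u : α, Fin (a u)) → Bool)
        × ((Σ u : α, Fin (b u)) → Bool)) : ℝ)
      = (Fintype.card ((Σ u : α, Fin (a u)) → Bool) : ℝ)
        * (Fintype.card ((Σ u : α, Fin (b u)) → Bool) : ℝ) := by
    rw [Fintype.card_prod]
    push_cast
    ring
  have hpos : (0:ℝ) < (Fintype.card (((Σ u : α, Fin (a u)) → Bool)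
      × ((Σ u : α, Fin (b u)) → Bool)) : ℝ) := by
    exact_mod_cast Fintype.card_pos
  rw [div_lt_iff₀ hpos, hprod]
  have hE0 : (0:ℝ) ≤ (E.card : ℝ) := Nat.cast_nonneg _
  have hF0 : (0:ℝ) ≤ (F.card : ℝ) := Nat.cast_nonneg _
  nlinarith [hEcard, hFcard, hNb, hNa, hE0, hF0]
end

section
/- Let V be a countable set and let p, q be probability mass functions on V with p(v) > 0 and q(v) > 0 for every v ∈ V. Then, with both sides valued in [0, ∞], D(p‖q) + D(q‖p) ≤ ∑_{v ∈ V} ((p(v) + q(v))/4) · [ (1 − p(v)/q(v))² + (1 − q(v)/p(v))² ], where D(p‖q) = ∑_{v} p(v)·log(p(v)/q(v)) is the Kullback–Leibler divergence. -/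
lemma log_le_half_sub_inv {t : ℝ} (ht : 1 ≤ t) : Real.log t ≤ (t - t⁻¹) / 2 := by
  have ht0 : (0:ℝ) < t := lt_of_lt_of_le one_pos ht
  have := Real.sinh_log ht0
  rcases eq_or_lt_of_le (Real.log_nonneg ht) with h | h
  · rw [← h, ← this, ← h, Real.sinh_zero]
  · exact le_of_lt (this ▸ (Real.self_lt_sinh_iff.mpr h))

lemma key_half (a b : ℝ) (ha : 0 < a) (hb : 0 < b) (hba : b ≤ a) :
    (a - b) * Real.log (a / b) ≤ ((a + b) / 4) * ((1 - a / b) ^ 2 + (1 - b / a) ^ 2) := by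
  have ht : 1 ≤ a / b := (one_le_div hb).mpr hba
  have hlog : Real.log (a / b) ≤ (a / b - b / a) / 2 := by
    have := log_le_half_sub_inv ht
    rwa [inv_div] at this
  have h1 : (a - b) * Real.log (a / b) ≤ (a - b) * ((a / b - b / a) / 2) :=
    mul_le_mul_of_nonneg_left hlog (by linarith)
  refine h1.trans ?_
  rw [div_sub_div _ _ hb.ne' ha.ne', one_sub_div hb.ne', one_sub_div ha.ne', div_pow, div_pow,
    div_add_div _ _ (by positivity) (by positivity), div_div, mul_div_assoc' (a - b),
    mul_div_assoc' ((a + b) / 4), div_le_div_iff₀ (by positivity) (by positivity)]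
  nlinarith [mul_nonneg (mul_nonneg (mul_pos (add_pos ha hb) (mul_pos ha hb)).le
    (sq_nonneg (a - b))) (sq_nonneg (a - b))]

lemma key (a b : ℝ) (ha : 0 < a) (hb : 0 < b) :
    (a - b) * Real.log (a / b) ≤ ((a + b) / 4) * ((1 - a / b) ^ 2 + (1 - b / a) ^ 2) := by
  rcases le_total b a with h | h
  · exact key_half a b ha hb h
  · have := key_half b a hb ha h
    have hlog : Real.log (a / b) = - Real.log (b / a) := by
      rw [← Real.log_inv, inv_div]
    rw [hlog]
    calc (a - b) * -Real.log (b / a) = (b - a) * Real.log (b / a) := by ring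
    _ ≤ ((b + a) / 4) * ((1 - b / a) ^ 2 + (1 - a / b) ^ 2) := this
    _ = ((a + b) / 4) * ((1 - a / b) ^ 2 + (1 - b / a) ^ 2) := by ring

/-- Lemma 5.1: the symmetrized KL divergence `D(p‖q) + D(q‖p) = ∑ᵥ (p(v) − q(v))·log(p(v)/q(v))`
(a sum of nonnegative terms, valued in `[0,∞]`) is bounded above by
`∑ᵥ ((p(v)+q(v))/4)·[(1 − p(v)/q(v))² + (1 − q(v)/p(v))²]`. -/
theorem symmetrized_KL_le_rational {V : Type*} [Countable V] (p q : V → ℝ)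
    (hp : ∀ v, 0 < p v) (hq : ∀ v, 0 < q v)
    (hps : ∑' v, p v = 1) (hqs : ∑' v, q v = 1) :
    ∑' v, ENNReal.ofReal ((p v - q v) * Real.log (p v / q v)) ≤
      ∑' v, ENNReal.ofReal
        (((p v + q v) / 4) * ((1 - p v / q v) ^ 2 + (1 - q v / p v) ^ 2)) := by
  exact ENNReal.tsum_le_tsum fun v =>
    ENNReal.ofReal_le_ofReal (key (p v) (q v) (hp v) (hq v))
end
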